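/- arXiv:0905.2040 — 12 statements merged into one kernel-verified Lean document; each statement's English description precedes it below -/
import Mathlib

section
/- A loop (Q,·,\,/) is a universal Osborn loop (i.e., every principal isotope of Q is an Osborn loop) if and only if it satisfies the identity: x · u\{(yz)/v · [u\(xv)]} = (x · u\{[y(u\([(uv)/(u\(xv))]·v))]/v · [u\(xv)]})/v · u\[((uz)/v)(u\(xv))] for all x,y,z,u,v ∈ Q. -/
/-- A loop: a set with multiplication, left division `ld`, right division `rd`
and a two-sided identity `e`. -/
structure LoopStr (Q : Type*) where
  mul : Q → Q → Q
  ld : Q → Q → Q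
  rd : Q → Q → Q
  e : Q
  mul_ld : ∀ x y, mul x (ld x y) = y
  rd_mul : ∀ x y, mul (rd y x) x = y
  ld_mul : ∀ x y, ld x (mul x y) = y
  mul_rd : ∀ x y, rd (mul y x) x = y
  one_mul : ∀ x, mul e x = x
  mul_one : ∀ x, mul x e = x

namespace LoopStr

variable {Q : Type*} (L : LoopStr Q)

/-- The left inverse `x^λ` of `x`, i.e. the unique element with `x^λ · x = e`. -/
def lam (x : Q) : Q := L.rd L.e x

/-- The right inverse `x^ρ` of `x`, i.e. the unique element with `x · x^ρ = e`. -/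
def rho (x : Q) : Q := L.ld x L.e

/-- A binary operation `op` with identity `e'` is Osborn if, whenever `xl` is a
left inverse of `x` w.r.t. `op`, the Osborn identity
`x(yz·x) = (x(y·x^λ·x))·(zx)` holds. -/
def IsOsbornOp (op : Q → Q → Q) (e' : Q) : Prop :=
  ∀ x y z xl, op xl x = e' →
    op x (op (op y z) x) = op (op x (op (op y xl) x)) (op z x)

/-- The `u,v`-principal isotope: `x ∗ y = (x/v)·(u\y)`; its identity is `u·v`. -/
def isotope (u v : Q) : Q → Q → Q := fun x y => L.mul (L.rd x v) (L.ld u y)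

/-- `Q` is a universal Osborn loop: every `u,v`-principal isotope is Osborn. -/
def Universal : Prop := ∀ u v, IsOsbornOp (L.isotope u v) (L.mul u v)

/-- `Q` is a left universal Osborn loop: every left principal isotope
`x ∗ y = (x/v)·y` (identity `v`) is Osborn. -/
def LeftUniversal : Prop := ∀ v, IsOsbornOp (fun x y => L.mul (L.rd x v) y) v

/-- `Q` is a right universal Osborn loop: every right principal isotope
`x ∗ y = x·(u\y)` (identity `u`) is Osborn. -/
def RightUniversal : Prop := ∀ u, IsOsbornOp (fun x y => L.mul x (L.ld u y)) u

end LoopStr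

open LoopStr

theorem universal_osborn_iff {Q : Type*} (L : LoopStr Q) :
    L.Universal ↔ ∀ x y z u v,
      L.mul x (L.ld u (L.mul (L.rd (L.mul y z) v) (L.ld u (L.mul x v)))) =
      L.mul
        (L.rd
          (L.mul x
            (L.ld u
              (L.mul
                (L.rd
                  (L.mul y
                    (L.ld u (L.mul (L.rd (L.mul u v) (L.ld u (L.mul x v))) v)))
                  v)
                (L.ld u (L.mul x v)))))
          v)
        (L.ld u (L.mul (L.rd (L.mul u z) v) (L.ld u (L.mul x v)))) := by
  constructor
  · intro h x y z u v
    have hxl : L.isotope u v (L.mul (L.rd (L.mul u v) (L.ld u (L.mul x v))) v)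
        (L.mul x v) = L.mul u v := by
      simp [isotope, L.mul_rd, L.rd_mul]
    have := h u v (L.mul x v) (L.mul y v) (L.mul u z) _ hxl
    simpa [isotope, L.mul_rd, L.ld_mul] using this
  · intro h u v X Y Z Xl hXl
    have hrd : L.rd Xl v = L.rd (L.mul u v) (L.ld u X) := by
      have := congrArg (fun t => L.rd t (L.ld u X)) hXl
      simpa [isotope, L.mul_rd] using this
    have hXl' : Xl = L.mul (L.rd (L.mul u v) (L.ld u X)) v := by
      rw [← hrd, L.rd_mul]
    have key := h (L.rd X v) (L.rd Y v) (L.ld u Z) u v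
    simp only [isotope, L.rd_mul, L.mul_ld] at key ⊢
    rw [hXl']
    exact key
end

section
/- A loop (Q,·,\,/) is a left universal Osborn loop (i.e., every left principal isotope x∗y = (x/v)·y is an Osborn loop) if and only if it obeys the identity x·[(y·zv)/v · (xv)] = (x·{[y([v/(xv)]·v)]/v · (xv)})/v · [z·(xv)] for all x,y,z,v ∈ Q. -/
open LoopStr

theorem left_universal_osborn_iff {Q : Type*} (L : LoopStr Q) :
    L.LeftUniversal ↔ ∀ x y z v,
      L.mul x (L.mul (L.rd (L.mul y (L.mul z v)) v) (L.mul x v)) =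
      L.mul
        (L.rd
          (L.mul x
            (L.mul (L.rd (L.mul y (L.mul (L.rd v (L.mul x v)) v)) v)
              (L.mul x v)))
          v)
        (L.mul z (L.mul x v)) := by
  constructor
  · intro h x y z v
    have hinv : L.mul (L.rd (L.mul (L.rd v (L.mul x v)) v) v) (L.mul x v) = v := by
      rw [L.mul_rd, L.rd_mul]
    have := h v (L.mul x v) (L.mul y v) (L.mul z v)
      (L.mul (L.rd v (L.mul x v)) v) hinv
    simpa [LoopStr.IsOsbornOp, L.mul_rd] using this
  · intro h v X Y Z Xl hXl
    simp only at hXl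
    have hXl' : Xl = L.mul (L.rd v X) v := by
      have h1 : L.rd v X = L.rd Xl v := by
        conv_lhs => rw [← hXl, L.mul_rd]
      rw [h1, L.rd_mul]
    subst hXl'
    have := h (L.rd X v) (L.rd Y v) (L.rd Z v) v
    simpa [L.rd_mul] using this
end

section
/- A loop (Q,·,\,/) is a right universal Osborn loop (i.e., every right principal isotope x∗y = x·(u\y) is an Osborn loop) if and only if it obeys the identity (ux)·u\{(yz)·x} = ((ux)·u\{[y(u\(u/x))]·x})·u\[(uz)·x] for all x,y,z,u ∈ Q. -/
open LoopStr

theorem right_universal_osborn_iff {Q : Type*} (L : LoopStr Q) :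
    L.RightUniversal ↔ ∀ x y z u,
      L.mul (L.mul u x) (L.ld u (L.mul (L.mul y z) x)) =
      L.mul
        (L.mul (L.mul u x)
          (L.ld u (L.mul (L.mul y (L.ld u (L.rd u x))) x)))
        (L.ld u (L.mul (L.mul u z) x)) := by
  constructor
  · intro h x y z u
    have := h u (L.mul u x) y (L.mul u z) (L.rd u x)
      (by show L.mul (L.rd u x) (L.ld u (L.mul u x)) = u; rw [L.ld_mul, L.rd_mul])
    simpa only [L.ld_mul] using this
  · intro h u x y z xl hxl
    simp only [] at hxl ⊢
    have hx : L.rd u (L.ld u x) = xl := by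
      have := L.mul_rd (L.ld u x) xl
      rwa [hxl] at this
    have := h (L.ld u x) y (L.ld u z) u
    simp only [L.mul_ld, hx] at this
    exact this
end

section
/- In every universal Osborn loop Q the identity uu · (u\(uu·u)) = (u·uu)·u holds for all u ∈ Q. -/
open LoopStr
private theorem cg {Q : Type*} (f : Q → Q → Q) {a a' b b' : Q}
    (h1 : a = a') (h2 : b = b') : f a b = f a' b' := by rw [h1, h2]

private theorem ld_one {Q : Type*} (L : LoopStr Q) (x : Q) : L.ld L.e x = x := by
  have h := L.ld_mul L.e x; rwa [L.one_mul] at h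

private theorem rd_one {Q : Type*} (L : LoopStr Q) (x : Q) : L.rd x L.e = x := by
  have h := L.mul_rd L.e x; rwa [L.mul_one] at h

private theorem ld_self {Q : Type*} (L : LoopStr Q) (x : Q) : L.ld x x = L.e := by
  have h := L.ld_mul x L.e; rwa [L.mul_one] at h

private theorem rd_self {Q : Type*} (L : LoopStr Q) (x : Q) : L.rd x x = L.e := by
  have h := L.mul_rd x L.e; rwa [L.one_mul] at h

theorem universal_osborn_cube_identity {Q : Type*} (L : LoopStr Q)
    (h : L.Universal) (u : Q) :
    L.mul (L.mul u u) (L.ld u (L.mul (L.mul u u) u)) =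
      L.mul (L.mul u (L.mul u u)) u := by
  have hc : L.isotope u u (L.mul (L.rd (L.mul u u) (L.ld u u)) u) u = L.mul u u := by
    show L.mul (L.rd (L.mul (L.rd (L.mul u u) (L.ld u u)) u) u) (L.ld u u) = L.mul u u
    rw [L.mul_rd]; exact L.rd_mul _ _
  have hyp := h u u u (L.mul (L.mul u u) u) (L.mul u u) (L.mul (L.rd (L.mul u u) (L.ld u u)) u) hc
  simp only [LoopStr.isotope] at hyp
  have eq0 : (L.mul u u) = (L.rd (L.mul (L.mul u u) u) u) := ((Eq.trans (cg L.rd rfl rfl) (L.mul_rd u (L.mul u u)))).symm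
  have eq1 : (L.ld u u) = L.e := (Eq.trans (cg L.ld rfl rfl) (ld_self L u))
  have eq2 : (L.rd (L.mul u u) (L.ld u u)) = (L.rd (L.mul (L.mul u u) u) u) := (Eq.trans (Eq.trans (cg L.rd rfl eq1) (rd_one L (L.mul u u))) ((Eq.trans (cg L.rd rfl rfl) (L.mul_rd u (L.mul u u)))).symm)
  have eq3 : (L.mul (L.mul u u) u) = (L.mul (L.rd (L.mul u u) (L.ld u u)) u) := ((Eq.trans (cg L.mul eq2 rfl) (L.rd_mul u (L.mul (L.mul u u) u)))).symm
  have eq4 : (L.ld u (L.mul (L.mul u u) u)) = (L.ld u (L.mul (L.rd (L.mul u u) (L.ld u u)) u)) := (cg L.ld rfl eq3)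
  have eq5 : u = (L.ld u (L.mul u u)) := ((Eq.trans (cg L.ld rfl rfl) (L.ld_mul u u))).symm
  have eq6 : (L.mul (L.rd (L.mul (L.rd (L.mul (L.mul u u) u) u) (L.ld u (L.mul u u))) u) (L.ld u u)) = (L.mul u u) := (Eq.trans (Eq.trans (Eq.trans (cg L.mul rfl eq1) (L.mul_one (L.rd (L.mul (L.rd (L.mul (L.mul u u) u) u) (L.ld u (L.mul u u))) u))) (Eq.trans (cg L.rd rfl eq5) (L.mul_rd (L.ld u (L.mul u u)) (L.rd (L.mul (L.mul u u) u) u)))) (Eq.trans (cg L.rd rfl rfl) (L.mul_rd u (L.mul u u))))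
  have eq7 : (L.rd u u) = L.e := (Eq.trans (cg L.rd rfl rfl) (rd_self L u))
  have eq8 : (L.mul (L.rd (L.mul u u) u) (L.ld u u)) = u := (Eq.trans (Eq.trans (cg L.mul rfl eq1) (L.mul_one (L.rd (L.mul u u) u))) (Eq.trans (cg L.rd rfl rfl) (L.mul_rd u u)))
  have eq9 : (L.ld u (L.mul (L.rd (L.mul u u) u) (L.ld u u))) = L.e := (Eq.trans (cg L.ld rfl eq8) (ld_self L u))
  have eq10 : u = (L.rd (L.mul (L.rd u u) (L.ld u (L.mul (L.rd (L.mul (L.rd (L.mul (L.mul u u) u) u) (L.ld u (L.mul (L.rd (L.mul u u) (L.ld u u)) u))) u) (L.ld u u)))) u) := (Eq.trans (Eq.trans (Eq.trans ((Eq.trans (cg L.ld rfl eq6) (L.ld_mul u u))).symm ((Eq.trans (cg L.mul eq7 rfl) (L.one_mul (L.ld u (L.mul (L.rd (L.mul (L.rd (L.mul (L.mul u u) u) u) (L.ld u (L.mul u u))) u) (L.ld u u)))))).symm) hyp) (Eq.trans (cg L.mul rfl eq9) (L.mul_one (L.rd (L.mul (L.rd u u) (L.ld u (L.mul (L.rd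 (L.mul (L.rd (L.mul (L.mul u u) u) u) (L.ld u (L.mul (L.rd (L.mul u u) (L.ld u u)) u))) u) (L.ld u u)))) u))))
  have eq11 : (L.mul u u) = (L.ld u (L.mul (L.rd (L.mul (L.rd (L.mul (L.mul u u) u) u) (L.ld u (L.mul (L.rd (L.mul u u) (L.ld u u)) u))) u) (L.ld u u))) := (Eq.trans (Eq.trans (cg L.mul eq10 rfl) (L.rd_mul u (L.mul (L.rd u u) (L.ld u (L.mul (L.rd (L.mul (L.rd (L.mul (L.mul u u) u) u) (L.ld u (L.mul (L.rd (L.mul u u) (L.ld u u)) u))) u) (L.ld u u)))))) (Eq.trans (cg L.mul eq7 rfl) (L.one_mul (L.ld u (L.mul (L.rd (L.mul (L.rd (L.mul (L.mul u u) u) u) (L.ld u (L.mul (L.rd (L.mul u u) (L.ld u u)) u))) u) (L.ld u u))))))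
  have eq12 : (L.mul u (L.mul u u)) = (L.rd (L.mul (L.rd (L.mul (L.mul u u) u) u) (L.ld u (L.mul (L.rd (L.mul u u) (L.ld u u)) u))) u) := (Eq.trans (Eq.trans (cg L.mul rfl eq11) (L.mul_ld u (L.mul (L.rd (L.mul (L.rd (L.mul (L.mul u u) u) u) (L.ld u (L.mul (L.rd (L.mul u u) (L.ld u u)) u))) u) (L.ld u u)))) (Eq.trans (cg L.mul rfl eq1) (L.mul_one (L.rd (L.mul (L.rd (L.mul (L.mul u u) u) u) (L.ld u (L.mul (L.rd (L.mul u u) (L.ld u u)) u))) u))))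
  have eq13 : (L.mul (L.mul u u) (L.ld u (L.mul (L.mul u u) u))) = (L.mul (L.mul u (L.mul u u)) u) := (Eq.trans (cg L.mul eq0 eq4) ((Eq.trans (cg L.mul eq12 rfl) (L.rd_mul u (L.mul (L.rd (L.mul (L.mul u u) u) u) (L.ld u (L.mul (L.rd (L.mul u u) (L.ld u u)) u)))))).symm)
  exact eq13
end

section
/- In a left universal Osborn loop Q, the identity v·(vv) = (v^λ\v)·v holds for all v ∈ Q, where v^λ is the left inverse of v. -/
open LoopStr

theorem left_universal_osborn_cube {Q : Type*} (L : LoopStr Q)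
    (h : L.LeftUniversal) (v : Q) :
    L.mul v (L.mul v v) = L.mul (L.ld (L.lam v) v) v := by
  have hvv : L.rd (L.mul v v) v = v := L.mul_rd v v
  have hv : L.rd v v = L.e := by
    have := L.mul_rd v L.e
    rwa [L.one_mul] at this
  have H := h v L.e (L.mul v v) v (L.mul v v) (by show L.mul (L.rd (L.mul v v) v) L.e = v; rw [hvv, L.mul_one])
  simp only [hvv, hv, L.mul_one, L.one_mul] at H
  rw [L.rd_mul] at H
  have T : L.mul (L.lam v) (L.rd (L.mul v (L.mul v v)) v) = v := by
    have h2 := congrArg (fun t => L.mul t v) H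
    simp only [L.rd_mul, L.one_mul] at h2
    exact h2.symm
  have h3 : L.rd (L.mul v (L.mul v v)) v = L.ld (L.lam v) v := by
    have h4 := congrArg (L.ld (L.lam v)) T
    rwa [L.ld_mul] at h4
  conv_lhs => rw [← L.rd_mul v (L.mul v (L.mul v v))]
  rw [h3]
end

section
/- In a left universal Osborn loop Q, the identity vv·vv = (v^λ\(v^{λλ}·v))·v holds for all v ∈ Q, where v^λ is the left inverse of v and v^{λλ} = (v^λ)^λ. -/
open LoopStr

theorem left_universal_osborn_fourth_power {Q : Type*} (L : LoopStr Q)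
    (h : L.LeftUniversal) (v : Q) :
    L.mul (L.mul v v) (L.mul v v) =
      L.mul (L.ld (L.lam v) (L.mul (L.lam (L.lam v)) v)) v := by
  have hxl : L.mul (L.rd (L.mul v v) v) L.e = v := by
    rw [L.mul_rd, L.mul_one]
  have inst := h v L.e (L.mul (L.mul v v) v) L.e (L.mul v v) hxl
  simp only [L.mul_rd, L.mul_one, L.one_mul, L.rd_mul] at inst
  -- now inst : L.e = L.mul (L.rd A v) (L.rd L.e v) with
  -- A = L.mul (L.rd L.e v) (L.rd (L.mul (L.mul v v) (L.mul v v)) v)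
  set A := L.mul (L.rd L.e v) (L.rd (L.mul (L.mul v v) (L.mul v v)) v) with hA
  have h1 : L.rd L.e (L.rd L.e v) = L.rd A v := by
    calc L.rd L.e (L.rd L.e v)
        = L.rd (L.mul (L.rd A v) (L.rd L.e v)) (L.rd L.e v) := by rw [← inst]
      _ = L.rd A v := L.mul_rd _ _
  have h2 : L.mul (L.rd L.e (L.rd L.e v)) v = A := by
    rw [h1]; exact L.rd_mul v A
  show L.mul (L.mul v v) (L.mul v v)
      = L.mul (L.ld (L.rd L.e v) (L.mul (L.rd L.e (L.rd L.e v)) v)) v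
  rw [h2, hA, L.ld_mul, L.rd_mul]
end

section
/- A left universal Osborn loop is a left self inverse property loop (x^λ·(xx) = x for all x) if and only if it is a 3-power-associative property loop (xx·x = x·xx for all x). -/
open LoopStr

theorem left_universal_osborn_lsip_iff_3pa {Q : Type*} (L : LoopStr Q)
    (h : L.LeftUniversal) :
    (∀ x, L.mul (L.lam x) (L.mul x x) = x) ↔
      (∀ x, L.mul (L.mul x x) x = L.mul x (L.mul x x)) := by

  -- Main derived identity: for all x w, x^λ · ((x·(w·x))/x) = w.
  have M : ∀ x w : Q,
      L.mul (L.rd L.e x) (L.rd (L.mul x (L.mul w x)) x) = w := by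
    have E : ∀ x w : Q,
        L.mul (L.rd L.e x) (L.rd (L.mul x (L.mul w x)) x) =
          L.mul (L.rd (L.mul (L.rd L.e x)
            (L.rd (L.mul x (L.mul x x)) x)) x) w := by
      intro x w
      have hc : L.mul (L.rd (L.mul x x) x) L.e = x := by
        rw [L.mul_rd, L.mul_one]
      have E0 := h x L.e (L.mul x x) (L.mul w x) (L.mul x x) hc
      simpa only [L.mul_rd, L.mul_one] using E0
    intro x w
    have P : L.mul (L.rd L.e x) (L.rd (L.mul x (L.mul x x)) x) = x := by
      have E0 := E x L.e
      rw [L.one_mul, L.mul_rd, L.mul_one] at E0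
      have h1 : L.mul (L.rd L.e x) x = L.e := L.rd_mul x L.e
      rw [h1] at E0
      have h2 := L.rd_mul x
        (L.mul (L.rd L.e x) (L.rd (L.mul x (L.mul x x)) x))
      rw [← E0] at h2
      rw [← h2, L.one_mul]
    have h3 : L.rd x x = L.e := by
      have := L.mul_rd x L.e
      rwa [L.one_mul] at this
    rw [E x w, P, h3, L.one_mul]
  have key : ∀ x : Q, L.mul (L.rd L.e x) (L.mul x x) =
      L.rd (L.ld x (L.mul (L.mul x x) x)) x := by
    intro x
    have Mx := M x (L.rd (L.ld x (L.mul (L.mul x x) x)) x)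
    rw [L.rd_mul, L.mul_ld, L.mul_rd] at Mx
    exact Mx
  constructor
  · intro H x
    have H' : L.mul (L.rd L.e x) (L.mul x x) = x := H x
    have k := key x
    rw [H'] at k
    have t1 := L.rd_mul x (L.ld x (L.mul (L.mul x x) x))
    rw [← k] at t1
    have t2 := L.mul_ld x (L.mul (L.mul x x) x)
    rw [← t1] at t2
    exact t2.symm
  · intro H x
    have k := key x
    rw [H x, L.ld_mul, L.mul_rd] at k
    exact k
end

section
/- In a loop satisfying x^{ρρ} = xx·x^ρ and x^{λλ} = x^λ·xx for all x, the loop is a LSIPL (x^λ·xx = x) if and only if it is a RSIPL (xx·x^ρ = x). -/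
open LoopStr

theorem lsip_iff_rsip {Q : Type*} (L : LoopStr Q)
    (hrho : ∀ x, L.rho (L.rho x) = L.mul (L.mul x x) (L.rho x))
    (hlam : ∀ x, L.lam (L.lam x) = L.mul (L.lam x) (L.mul x x)) :
    (∀ x, L.mul (L.lam x) (L.mul x x) = x) ↔
      (∀ x, L.mul (L.mul x x) (L.rho x) = x) := by
  have lam_mul : ∀ x, L.mul (L.lam x) x = L.e := fun x => L.rd_mul x L.e
  have mul_rho : ∀ x, L.mul x (L.rho x) = L.e := fun x => L.mul_ld x L.e
  have lam_uniq : ∀ x z, L.mul z x = L.e → z = L.lam x := by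
    intro x z h
    have := L.mul_rd x z
    rw [h] at this
    exact this.symm
  have rho_uniq : ∀ x z, L.mul x z = L.e → z = L.rho x := by
    intro x z h
    have := L.ld_mul x z
    rw [h] at this
    exact this.symm
  constructor
  · intro hL x
    -- λλ = id
    have hll : ∀ y, L.lam (L.lam y) = y := fun y => (hlam y).trans (hL y)
    -- ρ = λ
    have hrl : ∀ y, L.rho y = L.lam y := by
      intro y
      have h1 : L.mul y (L.lam y) = L.e := by
        have := lam_mul (L.lam y)
        rwa [hll y] at this
      exact (rho_uniq y (L.lam y) h1).symm
    have := hrho x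
    rw [hrl x, hrl (L.lam x), hll x] at this
    rw [hrl x]
    exact this.symm
  · intro hR x
    have hrr : ∀ y, L.rho (L.rho y) = y := fun y => (hrho y).trans (hR y)
    have hlr : ∀ y, L.lam y = L.rho y := by
      intro y
      have h1 : L.mul (L.rho y) y = L.e := by
        have := mul_rho (L.rho y)
        rwa [hrr y] at this
      exact (lam_uniq y (L.rho y) h1).symm
    have := hlam x
    rw [hlr x, hlr (L.rho x), hrr x] at this
    rw [hlr x]
    exact this.symm
end

section
/- In every right universal Osborn loop Q, the identity y·(u\(u/x)) = ((y·x)·((u·x)\u))/x holds for all x,y,u ∈ Q. -/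
open LoopStr

section AuxOsborn

variable {Q : Type*}

private theorem ld_self_aux (M : LoopStr Q) (a : Q) : M.ld a a = M.e := by
  have h := M.ld_mul a M.e
  rw [M.mul_one] at h
  exact h

/-- The right principal isotope of `L` at `u`, packaged as a loop. -/
def rIso (L : LoopStr Q) (u : Q) : LoopStr Q where
  mul a b := L.mul a (L.ld u b)
  ld a b := L.mul u (L.ld a b)
  rd a b := L.rd a (L.ld u b)
  e := u
  mul_ld := by intro a b; simp only [L.ld_mul, L.mul_ld]
  rd_mul := by intro a b; simp only [L.rd_mul]
  ld_mul := by intro a b; simp only [L.ld_mul, L.mul_ld]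
  mul_rd := by intro a b; simp only [L.mul_rd]
  one_mul := by intro a; simp only [L.mul_ld]
  mul_one := by intro a; simp only [ld_self_aux, L.mul_one]

/-- In any loop whose multiplication is an Osborn operation,
`z (v zᵨ) = (z v)/z`. -/
theorem osborn_key (M : LoopStr Q) (ho : LoopStr.IsOsbornOp M.mul M.e) (z v : Q) :
    M.mul z (M.mul v (M.ld z M.e)) = M.rd (M.mul z v) z := by
  have hlr : ∀ a : Q, M.rd M.e (M.ld a M.e) = a := by
    intro a
    have h := M.mul_rd (M.ld a M.e) a
    rw [M.mul_ld] at h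
    exact h
  have O : ∀ x y w, M.mul x (M.mul (M.mul y w) x) =
      M.mul (M.mul x (M.mul (M.mul y (M.rd M.e x)) x)) (M.mul w x) :=
    fun x y w => ho x y w (M.rd M.e x) (M.rd_mul x M.e)
  have L17 : ∀ x y, M.mul x (M.mul (M.mul y (M.rd M.e x)) x) =
      M.rd (M.mul x (M.mul y x)) x := by
    intro x y
    have h1 := O x y M.e
    rw [M.mul_one, M.one_mul] at h1
    have h2 := M.mul_rd x (M.mul x (M.mul (M.mul y (M.rd M.e x)) x))
    rw [← h1] at h2
    exact h2.symm
  have L26 : ∀ x, M.mul x (M.mul (M.mul (M.rd M.e x) (M.rd M.e x)) x) = M.e := by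
    intro x
    have h1 := L17 x (M.rd M.e x)
    rw [M.rd_mul x M.e] at h1
    rw [M.mul_one] at h1
    rw [h1]
    have h2 := M.mul_rd x M.e
    rw [M.one_mul] at h2
    exact h2
  have L36 : ∀ x y, M.mul x (M.mul (M.mul (M.rd M.e x) y) x) = M.mul y x := by
    intro x y
    have h1 := O x (M.rd M.e x) y
    rw [L26 x, M.one_mul] at h1
    exact h1
  have L48 : ∀ x w, M.mul (M.rd M.e x) w = M.rd (M.ld x (M.mul w x)) x := by
    intro x w
    have h1 := congrArg (M.ld x) (L36 x w)
    rw [M.ld_mul] at h1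
    have h2 := M.mul_rd x (M.mul (M.rd M.e x) w)
    rw [h1] at h2
    exact h2.symm
  have L58 : ∀ x y, M.mul (M.rd M.e x) (M.mul x (M.mul (M.mul y (M.rd M.e x)) x)) = y := by
    intro x y
    rw [L17 x y]
    rw [L48 x (M.rd (M.mul x (M.mul y x)) x)]
    rw [M.rd_mul]
    rw [M.ld_mul]
    exact M.mul_rd x y
  have L74 : ∀ z y, M.mul z (M.mul (M.ld z M.e) (M.mul (M.mul y z) (M.ld z M.e))) = y := by
    intro z y
    have h1 := L58 (M.ld z M.e) y
    rw [hlr z] at h1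
    exact h1
  have L127 : ∀ z y, M.ld z y = M.mul (M.ld z M.e) (M.mul (M.mul y z) (M.ld z M.e)) := by
    intro z y
    have h1 := congrArg (M.ld z) (L74 z y)
    rw [M.ld_mul] at h1
    exact h1.symm
  have L36' : ∀ z y, M.mul (M.ld z M.e) (M.mul (M.mul z y) (M.ld z M.e)) =
      M.mul y (M.ld z M.e) := by
    intro z y
    have h1 := L36 (M.ld z M.e) y
    rw [hlr z] at h1
    exact h1
  have L152 : ∀ z w, M.mul (M.ld z (M.mul w z)) (M.ld z M.e) = M.ld z w := by
    intro z w
    have h1 := L36' z (M.ld z (M.mul w z))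
    rw [M.mul_ld] at h1
    rw [← L127 z w] at h1
    exact h1.symm
  have h1 := L152 z (M.rd (M.mul z v) z)
  rw [M.rd_mul] at h1
  rw [M.ld_mul] at h1
  have h2 := congrArg (M.mul z) h1
  rw [M.mul_ld] at h2
  exact h2

end AuxOsborn

theorem right_universal_osborn_OSI01 {Q : Type*} (L : LoopStr Q)
    (h : L.RightUniversal) (x y u : Q) :
    L.mul y (L.ld u (L.rd u x)) =
      L.rd (L.mul (L.mul y x) (L.ld (L.mul u x) u)) x := by
  have key := osborn_key (rIso L u) (h u) (L.mul u x) (L.mul y x)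
  simp only [rIso] at key
  simp only [L.ld_mul] at key
  have cond : L.mul (L.rd u x) (L.ld u (L.mul u x)) = u := by
    rw [L.ld_mul]; exact L.rd_mul x u
  have e1 := h u (L.mul u x) y u (L.rd u x) cond
  simp only [ld_self_aux, L.mul_one, L.ld_mul] at e1
  have e2 := congrArg (fun q => L.rd q x) e1
  simp only [L.mul_rd] at e2
  have e3 := key.trans e2
  have e4 := congrArg (L.ld (L.mul u x)) e3
  simp only [L.ld_mul] at e4
  have e5 := congrArg (L.mul u) e4
  simp only [L.mul_ld] at e5
  have e6 := congrArg (fun q => L.rd q x) e5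
  simp only [L.mul_rd] at e6
  exact e6.symm
end

section
/- In every right universal Osborn loop Q, the identity u·((u\(u^ρ·u))·u^ρ) = u^ρ holds for all u ∈ Q, where u^ρ is the right inverse of u. -/
open LoopStr

theorem right_universal_osborn_rho_identity {Q : Type*} (L : LoopStr Q)
    (h : L.RightUniversal) (u : Q) :
    L.mul u (L.mul (L.ld u (L.mul (L.rho u) u)) (L.rho u)) = L.rho u := by
  have lde : ∀ y, L.ld L.e y = y := fun y => (L.one_mul _).symm.trans (L.mul_ld _ _)
  have rdxx : ∀ x, L.rd x x = L.e := fun x => by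
    have := L.mul_rd x L.e
    rwa [L.one_mul] at this
  have rcancel : ∀ a b c, L.mul a c = L.mul b c → a = b := fun a b c hab => by
    have h1 := L.mul_rd c a
    have h2 := L.mul_rd c b
    rw [hab] at h1
    rw [h2] at h1
    exact h1.symm
  -- Osborn identity for the base loop (isotope at e)
  have O : ∀ x y z xl, L.mul xl x = L.e →
      L.mul x (L.mul (L.mul y z) x)
        = L.mul (L.mul x (L.mul (L.mul y xl) x)) (L.mul z x) := by
    intro x y z xl hxl
    have := h L.e x y z xl (by simpa [lde] using hxl)
    simpa [lde] using this
  set r := L.rho u with hr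
  have hu : L.mul u r = L.e := L.mul_ld u L.e
  -- instance (1): A = e
  have e1 := O r u r u hu
  rw [hu, L.one_mul] at e1
  have hA : L.mul r (L.mul (L.mul u u) r) = L.e := by
    have := L.mul_rd (L.mul r r) (L.mul r (L.mul (L.mul u u) r))
    rw [← e1, rdxx] at this
    exact this.symm
  -- instance (2)
  have e2 := O r u (L.ld u r) u hu
  rw [L.mul_ld u r, hA, L.one_mul] at e2
  -- instance (3)
  have e3 := O r u (L.ld u (L.mul r u)) u hu
  rw [L.mul_ld u (L.mul r u), hA, L.one_mul] at e3
  -- instance (4)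
  have e4 := O r r L.e u hu
  rw [L.mul_one, L.one_mul] at e4
  -- combine
  have key : L.mul (L.ld u (L.mul r u)) r = L.ld u r := by
    rw [← e3]
    exact rcancel _ _ r (e4.symm.trans e2)
  rw [key, L.mul_ld]
end

section
/- A right universal Osborn loop satisfies u^ρ·u = u·u^λ for all u if and only if it satisfies u·(u^λ·u^ρ) = u^ρ for all u. -/
open LoopStr

section Key

variable {Q : Type*} (L : LoopStr Q)

private lemma ldee (b : Q) : L.ld L.e b = b := by
  have h1 := L.ld_mul L.e b; rwa [L.one_mul] at h1

private lemma ldself (x : Q) : L.ld x x = L.e := by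
  have h1 := L.ld_mul x L.e; rwa [L.mul_one] at h1

private lemma rdself (x : Q) : L.rd x x = L.e := by
  have h1 := L.mul_rd x L.e; rwa [L.one_mul] at h1

/-- The key identity `u·((u\(u^ρ·u))·u^ρ) = u^ρ` in a right universal Osborn loop. -/
private lemma osborn_key_s17 (h : L.RightUniversal) (u : Q) :
    L.mul u (L.mul (L.ld u (L.mul (L.ld u L.e) u)) (L.ld u L.e)) = L.ld u L.e := by
  have hxl1 : L.mul L.e (L.ld u (L.mul u u)) = u := by
    rw [L.ld_mul, L.one_mul]
  have hxl2 : L.mul u (L.ld L.e (L.ld u L.e)) = L.e := by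
    rw [ldee, L.mul_ld]
  -- step1 : (u·u)·(u\((u\e)·u)) = u
  have H1 := h u (L.mul u u) L.e u L.e hxl1
  simp only [L.mul_ld, L.rd_mul, L.ld_mul, L.mul_rd, L.one_mul, L.mul_one,
    ldee L, ldself L, rdself L] at H1
  have step1 : L.mul (L.mul u u) (L.ld u (L.mul (L.ld u L.e) u)) = u := by
    have h1 := congrArg (fun t => L.rd t u) H1.symm
    simpa only [L.mul_rd] using h1
  -- step5 : (u·u)·(u\e) = (u·(e/u))·u
  have H5 := h u (L.mul u u) L.e (L.mul u (L.rd L.e u)) L.e hxl1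
  simp only [L.mul_ld, L.rd_mul, L.ld_mul, L.mul_rd, L.one_mul, L.mul_one,
    ldee L, ldself L, rdself L, step1] at H5
  -- step7 : (u\e)·((u·(e/u))·u) = e
  have H7 := h L.e (L.ld u L.e) u (L.ld u L.e) u hxl2
  simp only [L.mul_ld, L.rd_mul, L.ld_mul, L.mul_rd, L.one_mul, L.mul_one,
    ldee L, ldself L, rdself L, H5] at H7
  have step7 : L.mul (L.ld u L.e) (L.mul (L.mul u (L.rd L.e u)) u) = L.e := by
    have h1 := congrArg (fun t => L.rd t (L.mul (L.ld u L.e) (L.ld u L.e))) H7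
    simpa only [L.mul_rd, rdself L] using h1.symm
  -- step8 : (u\e)·((u\e)·(u\e)) = ((u\e)·(((u\e)·u)·(u\e)))·(u\e)
  have H8 := h L.e (L.ld u L.e) (L.ld u L.e) L.e u hxl2
  simp only [L.mul_ld, L.rd_mul, L.ld_mul, L.mul_rd, L.one_mul, L.mul_one,
    ldee L, ldself L, rdself L] at H8
  -- step10 : (u\e)·(((u\e)·u)·(u\e)) = u\(u\e)
  have H10 := h L.e (L.ld u L.e) u (L.ld u (L.ld u L.e)) u hxl2
  simp only [L.mul_ld, L.rd_mul, L.ld_mul, L.mul_rd, L.one_mul, L.mul_one,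
    ldee L, ldself L, rdself L, H5, step7] at H10
  have step10 : L.mul (L.ld u L.e) (L.mul (L.mul (L.ld u L.e) u) (L.ld u L.e))
      = L.ld u (L.ld u L.e) := by
    have h1 : L.mul (L.mul (L.ld u L.e)
        (L.mul (L.mul (L.ld u L.e) u) (L.ld u L.e))) (L.ld u L.e)
        = L.mul (L.ld u (L.ld u L.e)) (L.ld u L.e) := by
      rw [← H8, H10]
    have h2 := congrArg (fun t => L.rd t (L.ld u L.e)) h1
    simpa only [L.mul_rd] using h2
  -- H11 : u\(u\e) = (u\((u\e)·u))·(u\e)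
  have H11 := h L.e (L.ld u L.e) u (L.ld u (L.mul (L.ld u L.e) u)) u hxl2
  simp only [L.mul_ld, L.rd_mul, L.ld_mul, L.mul_rd, L.one_mul, L.mul_one,
    ldee L, ldself L, rdself L, H5, step7, step10] at H11
  rw [← H11, L.mul_ld]

end Key

theorem right_universal_osborn_comm_iff {Q : Type*} (L : LoopStr Q)
    (h : L.RightUniversal) :
    (∀ u, L.mul (L.rho u) u = L.mul u (L.lam u)) ↔
      (∀ u, L.mul u (L.mul (L.lam u) (L.rho u)) = L.rho u) := by
  constructor
  · intro H1 u
    have k := osborn_key_s17 L h u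
    have h1 : L.ld u (L.mul (L.ld u L.e) u) = L.rd L.e u := by
      have := H1 u
      simp only [LoopStr.rho, LoopStr.lam] at this
      rw [this, L.ld_mul]
    rw [h1] at k
    simpa only [LoopStr.rho, LoopStr.lam] using k
  · intro H2 u
    have k := osborn_key_s17 L h u
    have h2 := H2 u
    simp only [LoopStr.rho, LoopStr.lam] at h2
    have h3 : L.mul (L.ld u (L.mul (L.ld u L.e) u)) (L.ld u L.e)
        = L.mul (L.rd L.e u) (L.ld u L.e) := by
      have := congrArg (fun t => L.ld u t) (k.trans h2.symm)
      simpa only [L.ld_mul] using this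
    have h4 : L.ld u (L.mul (L.ld u L.e) u) = L.rd L.e u := by
      have := congrArg (fun t => L.rd t (L.ld u L.e)) h3
      simpa only [L.mul_rd] using this
    simp only [LoopStr.rho, LoopStr.lam]
    calc L.mul (L.ld u L.e) u
        = L.mul u (L.ld u (L.mul (L.ld u L.e) u)) := (L.mul_ld _ _).symm
      _ = L.mul u (L.rd L.e u) := by rw [h4]
end

section
/- Every Moufang loop satisfies the identity [y(x^{-1}u)·u^{-1}](xu) = [y(xu)·u^{-1}](x^{-1}u) for all x,y,u. -/
open LoopStr

theorem moufang_new_identity {Q : Type*} (L : LoopStr Q)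
    (inv : Q → Q)
    (hMoufang : ∀ x y z,
      L.mul (L.mul x y) (L.mul z x) = L.mul (L.mul x (L.mul y z)) x)
    (hlinv : ∀ x y, L.mul (inv x) (L.mul x y) = y)
    (hrinv : ∀ x y, L.mul (L.mul y x) (inv x) = y)
    (x y u : Q) :
    L.mul (L.mul (L.mul y (L.mul (inv x) u)) (inv u)) (L.mul x u) =
      L.mul (L.mul (L.mul y (L.mul x u)) (inv u)) (L.mul (inv x) u) := by
  have inv_mul : ∀ a, L.mul (inv a) a = L.e := by
    intro a; have h := hlinv a L.e; rwa [L.mul_one] at h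
  have inv_inv : ∀ a, inv (inv a) = a := by
    intro a
    have h := hlinv (inv a) a
    rwa [inv_mul a, L.mul_one] at h
  have hlinv' : ∀ a b, L.mul a (L.mul (inv a) b) = b := by
    intro a b; have h := hlinv (inv a) b; rwa [inv_inv] at h
  have hrinv' : ∀ a b, L.mul (L.mul b (inv a)) a = b := by
    intro a b; have h := hrinv (inv a) b; rwa [inv_inv] at h
  have flex : ∀ a b, L.mul a (L.mul b a) = L.mul (L.mul a b) a := by
    intro a b
    have h := hMoufang a L.e b
    rwa [L.mul_one, L.one_mul] at h
  have M2 : ∀ a b c,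
      L.mul b (L.mul c a) = L.mul (L.mul a (L.mul (L.mul (inv a) b) c)) a := by
    intro a b c
    have h := hMoufang a (L.mul (inv a) b) c
    rwa [hlinv' a b] at h
  have key : ∀ a b,
      L.mul (L.mul (L.mul b (L.mul (inv a) u)) (inv u)) (L.mul a u) = L.mul b u := by
    intro a b
    set A := L.mul (L.mul b (L.mul (inv a) u)) (inv u) with hA
    have step1 := M2 u A a
    have step2 : L.mul (inv u) A = L.mul (L.mul (inv u) b) (inv a) := by
      rw [hA, flex (inv u) (L.mul b (L.mul (inv a) u))]
      have h := hMoufang (inv u) b (L.mul (inv a) u)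
      rw [← h, hrinv u (inv a)]
    rw [step1, step2, hrinv' a (L.mul (inv u) b), hlinv' u b]
  have h1 := key x y
  have h2 := key (inv x) y
  rw [inv_inv x] at h2
  rw [h1, h2]
end
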